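/- If the infimum s* of the homogenized problem is attained and every minimizer (x₀*, x*) has x₀* = 0, and r* = s*, then r* is not attained on S. Furthermore, if for some minimizer (0, x*) there is a sequence (x_{k,0}, x_k) ∈ S̃ with x_{k,0} > 0 converging to (0, x*), then p(x_k/x_{k,0})/q(x_k/x_{k,0}) → r* as k → ∞. -/

import Mathlib

open MvPolynomial Filter

/-- if `s*` is attained and every minimizer of the homogenized
problem has `x₀* = 0`, and `r* = s* = ρ`, then `r*` is not attained; moreover,
for any minimizer `(0, x*)` and any sequence in `S̃` with positive first
coordinate converging to it, the rational values `p(x_k/x_{k,0})/q(x_k/x_{k,0})`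
converge to `r*`. -/
lemma eval_smul_homog {σ : Type*} [Fintype σ] (F : MvPolynomial σ ℝ) {n : ℕ}
    (hF : F.IsHomogeneous n) (t : ℝ) (x : σ → ℝ) :
    eval (t • x) F = t ^ n * eval x F := by
  rw [eval_eq, eval_eq, Finset.mul_sum]
  apply Finset.sum_congr rfl
  intro dd hdd
  have hdeg : ∑ i ∈ dd.support, dd i = n := by
    have := hF (mem_support_iff.mp hdd)
    simpa [Finsupp.weight_apply, Finsupp.sum] using this
  rw [← hdeg]
  simp only [Pi.smul_apply, smul_eq_mul, mul_pow]
  rw [Finset.prod_mul_distrib, Finset.prod_pow_eq_pow_sum]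
  ring

theorem not_attained_of_minimizers_at_infinity
    (n m₁ m₂ : ℕ)
    (p q : MvPolynomial (Fin n) ℝ)
    (h : Fin m₁ → MvPolynomial (Fin n) ℝ) (g : Fin m₂ → MvPolynomial (Fin n) ℝ)
    (d : ℕ) (hd : d = max p.totalDegree q.totalDegree)
    (P Q : MvPolynomial (Fin (n + 1)) ℝ)
    (hP : P.IsHomogeneous d)
    (hP1 : ∀ x : Fin n → ℝ, eval (Fin.cons 1 x) P = eval x p)
    (hQ : Q.IsHomogeneous d)
    (hQ1 : ∀ x : Fin n → ℝ, eval (Fin.cons 1 x) Q = eval x q)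
    (Hh : Fin m₁ → MvPolynomial (Fin (n + 1)) ℝ)
    (Hg : Fin m₂ → MvPolynomial (Fin (n + 1)) ℝ)
    (hHh : ∀ i, (Hh i).IsHomogeneous (h i).totalDegree)
    (hHh1 : ∀ i, ∀ x : Fin n → ℝ, eval (Fin.cons 1 x) (Hh i) = eval x (h i))
    (hHg : ∀ j, (Hg j).IsHomogeneous (g j).totalDegree)
    (hHg1 : ∀ j, ∀ x : Fin n → ℝ, eval (Fin.cons 1 x) (Hg j) = eval x (g j))
    (rfeas : (Fin n → ℝ) → Prop)
    (hrfeas : ∀ x, rfeas x ↔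
      (∀ i, eval x (h i) = 0) ∧ (∀ j, 0 ≤ eval x (g j)) ∧ 0 < eval x q)
    (Stilde : Set (Fin (n + 1) → ℝ))
    (hStilde : Stilde = {xt | (∀ i, eval xt (Hh i) = 0) ∧
      (∀ j, 0 ≤ eval xt (Hg j)) ∧ 0 ≤ xt 0})
    (sfeas : (Fin (n + 1) → ℝ) → Prop)
    (hsfeas : ∀ xt, sfeas xt ↔ xt ∈ Stilde ∧ eval xt Q = 1)
    (ρ : ℝ)
    (hr : IsGLB {v : ℝ | ∃ x, rfeas x ∧ v = eval x p / eval x q} ρ)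
    (hs : IsGLB {v : ℝ | ∃ xt, sfeas xt ∧ v = eval xt P} ρ)
    (hattained : ∃ xt, sfeas xt ∧ eval xt P = ρ)
    (hall0 : ∀ xt, sfeas xt → eval xt P = ρ → xt 0 = 0) :
    (¬ ∃ x, rfeas x ∧ eval x p / eval x q = ρ) ∧
    (∀ xt : Fin (n + 1) → ℝ, sfeas xt → eval xt P = ρ →
      ∀ u : ℕ → (Fin (n + 1) → ℝ),
        (∀ k, u k ∈ Stilde ∧ 0 < u k 0) →
        Tendsto u atTop (nhds xt) →
        Tendsto (fun k =>
            eval (fun i : Fin n => u k i.succ / u k 0) p /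
              eval (fun i : Fin n => u k i.succ / u k 0) q)
          atTop (nhds ρ)) := by
  constructor
  · rintro ⟨x, hx, hval⟩
    obtain ⟨hxh, hxg, hxq⟩ := (hrfeas x).mp hx
    set c := eval x q with hc
    -- find t > 0 with t ^ d * c = 1
    obtain ⟨t, ht, htd⟩ : ∃ t : ℝ, 0 < t ∧ t ^ d * c = 1 := by
      by_cases hd0 : d = 0
      · refine ⟨1, one_pos, ?_⟩
        rw [hd0, pow_zero, one_mul]
        obtain ⟨xt₀, hsf₀, _⟩ := hattained
        have hQ1' : eval xt₀ Q = 1 := ((hsfeas xt₀).mp hsf₀).2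
        have hconst : ∀ v w : Fin (n + 1) → ℝ, eval v Q = eval w Q := by
          intro v w
          have h1 := eval_smul_homog Q hQ 0 v
          have h2 := eval_smul_homog Q hQ 0 w
          rw [hd0, pow_zero, one_mul, zero_smul] at h1 h2
          rw [← h1, ← h2]
        calc c = eval (Fin.cons 1 x) Q := (hQ1 x).symm
          _ = eval xt₀ Q := hconst _ _
          _ = 1 := hQ1'
      · refine ⟨c ^ (-(d : ℝ)⁻¹), Real.rpow_pos_of_pos hxq _, ?_⟩
        rw [← Real.rpow_natCast (c ^ (-(d : ℝ)⁻¹)) d, ← Real.rpow_mul hxq.le]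
        have : -(d : ℝ)⁻¹ * d = -1 := by
          field_simp
        rw [this, Real.rpow_neg_one]
        exact inv_mul_cancel₀ hxq.ne'
    set yt : Fin (n + 1) → ℝ := t • (Fin.cons 1 x : Fin (n + 1) → ℝ) with hyt
    have hyt0 : yt 0 = t := by simp [hyt]
    have hsyt : sfeas yt := by
      rw [hsfeas]
      constructor
      · rw [hStilde]
        refine ⟨fun i => ?_, fun j => ?_, ?_⟩
        · rw [hyt, eval_smul_homog _ (hHh i), hHh1 i, hxh i, mul_zero]
        · rw [hyt, eval_smul_homog _ (hHg j), hHg1 j]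
          exact mul_nonneg (pow_nonneg ht.le _) (hxg j)
        · rw [hyt0]; exact ht.le
      · rw [hyt, eval_smul_homog _ hQ, hQ1 x]; exact htd
    have hPyt : eval yt P = ρ := by
      have hp : eval x p = ρ * c := by
        have := hval
        field_simp at this
        linarith [this]
      rw [hyt, eval_smul_homog _ hP, hP1 x, hp]
      calc t ^ d * (ρ * c) = ρ * (t ^ d * c) := by ring
        _ = ρ := by rw [htd, mul_one]
    have := hall0 yt hsyt hPyt
    rw [hyt0] at this
    exact absurd this ht.ne'
  · intro xt hsxt hPxt u hu hconv
    have hQ1' : eval xt Q = 1 := ((hsfeas xt).mp hsxt).2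
    have hPc : Tendsto (fun k => eval (u k) P) atTop (nhds (eval xt P)) :=
      ((MvPolynomial.continuous_eval P).tendsto xt).comp hconv
    have hQc : Tendsto (fun k => eval (u k) Q) atTop (nhds (eval xt Q)) :=
      ((MvPolynomial.continuous_eval Q).tendsto xt).comp hconv
    have hdiv : Tendsto (fun k => eval (u k) P / eval (u k) Q) atTop (nhds ρ) := by
      have := hPc.div hQc (by rw [hQ1']; exact one_ne_zero)
      rwa [hQ1', hPxt, div_one] at this
    apply hdiv.congr
    intro k
    set t := u k 0 with htdef
    have ht : 0 < t := (hu k).2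
    set xk : Fin n → ℝ := fun i => u k i.succ / t with hxk
    have key : u k = t • (Fin.cons 1 xk : Fin (n + 1) → ℝ) := by
      funext i
      refine Fin.cases ?_ (fun j => ?_) i
      · simp [ht.ne', htdef]
      · simp [hxk, Pi.smul_apply, mul_div_cancel₀ _ ht.ne']
    rw [key, eval_smul_homog _ hP, eval_smul_homog _ hQ, hP1, hQ1,
      mul_div_mul_left _ _ (pow_ne_zero d ht.ne')]
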